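/- Let Ω ⊆ ℝⁿ be open, B > 0, C, ε ∈ ℝ. Suppose u : Ω → ℝ is continuous, C² on ω = {x ∈ Ω : u(x) > 0}, and satisfies u·Δu - B|u|^(1+ε) - C|∇u|² ≥ 0 on ω. If u(x₀) > 0 for some x₀ ∈ Ω, then u does not attain a maximum value on Ω. -/

import Mathlib

noncomputable def lap {n : ℕ} (u : EuclideanSpace ℝ (Fin n) → ℝ)
    (x : EuclideanSpace ℝ (Fin n)) : ℝ :=
  ∑ i, iteratedFDeriv ℝ 2 u x ![EuclideanSpace.single i 1, EuclideanSpace.single i 1]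

/-- 1D second-derivative test at a local max. -/
lemma key1d (g h : ℝ → ℝ) (L : ℝ) (I : Set ℝ) (hI : I ∈ nhds (0 : ℝ))
    (hg : ∀ t ∈ I, HasDerivAt g (h t) t) (h0 : h 0 = 0) (hL : HasDerivAt h L 0)
    (hmax : IsLocalMax g 0) : L ≤ 0 := by
  by_contra hpos
  push_neg at hpos
  have hslope : Filter.Tendsto (slope h 0) (nhdsWithin 0 {(0:ℝ)}ᶜ) (nhds L) :=
    hasDerivAt_iff_tendsto_slope.mp hL
  have hev : ∀ᶠ t in nhdsWithin 0 {(0:ℝ)}ᶜ, 0 < slope h 0 t :=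
    hslope.eventually (eventually_gt_nhds hpos)
  have hev' : ∀ᶠ t in nhdsWithin (0:ℝ) (Set.Ioi 0), 0 < slope h 0 t :=
    hev.filter_mono (nhdsWithin_mono 0 (fun t ht => by
      simp only [Set.mem_compl_iff, Set.mem_singleton_iff]
      exact ne_of_gt ht))
  have hmax' : ∀ᶠ t in nhdsWithin (0:ℝ) (Set.Ioi 0), g t ≤ g 0 ∧ t ∈ I :=
    ((hmax.and (Filter.eventually_of_mem hI (fun t ht => ht))).filter_mono
      nhdsWithin_le_nhds)
  obtain ⟨δ, hδ, hsub⟩ := mem_nhdsGT_iff_exists_Ioc_subset.mp (hev'.and hmax')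
  have hδ0 : (0:ℝ) < δ := hδ
  have h0I : (0:ℝ) ∈ I := mem_of_mem_nhds hI
  have hIoc : ∀ t ∈ Set.Ioc (0:ℝ) δ, 0 < slope h 0 t ∧ g t ≤ g 0 ∧ t ∈ I := hsub
  have hcont : ContinuousOn g (Set.Icc 0 δ) := by
    intro t ht
    rcases eq_or_lt_of_le ht.1 with h' | h'
    · exact h' ▸ (hg 0 h0I).continuousAt.continuousWithinAt
    · exact (hg t (hIoc t ⟨h', ht.2⟩).2.2).continuousAt.continuousWithinAt
  obtain ⟨c, hc, hceq⟩ := exists_hasDerivAt_eq_slope g h hδ0 hcont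
    (fun x hx => hg x (hIoc x ⟨hx.1, le_of_lt hx.2⟩).2.2)
  have hcpos : 0 < h c := by
    have hs := (hIoc c ⟨hc.1, le_of_lt hc.2⟩).1
    rw [slope_def_field, h0, sub_zero, sub_zero] at hs
    rcases div_pos_iff.mp hs with ⟨h1, _⟩ | ⟨_, h2⟩
    · exact h1
    · linarith [hc.1]
  have hgd : g δ ≤ g 0 := (hIoc δ ⟨hδ0, le_refl δ⟩).2.1
  have : h c ≤ 0 := by
    rw [hceq]
    apply div_nonpos_of_nonpos_of_nonneg <;> linarith
  linarith

/-- Directional second derivative is nonpositive at an interior local max of a C² function. -/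
lemma dir_second_nonpos {n : ℕ} (u : EuclideanSpace ℝ (Fin n) → ℝ)
    (ω : Set (EuclideanSpace ℝ (Fin n))) (hω : IsOpen ω) (hC2 : ContDiffOn ℝ 2 u ω)
    (a : EuclideanSpace ℝ (Fin n)) (ha : a ∈ ω) (hmax : IsLocalMax u a)
    (v : EuclideanSpace ℝ (Fin n)) : fderiv ℝ (fderiv ℝ u) a v v ≤ 0 := by
  set ℓ : ℝ → EuclideanSpace ℝ (Fin n) := fun t => a + t • v with hℓdef
  have hℓ : ∀ t : ℝ, HasDerivAt ℓ v t := by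
    intro t
    have : HasDerivAt (fun s : ℝ => s • v) ((1:ℝ) • v) t :=
      (hasDerivAt_id t).smul_const v
    simpa [hℓdef] using this.const_add a
  have hℓ0 : ℓ 0 = a := by simp [hℓdef]
  have hℓcont : ContinuousAt ℓ 0 := (hℓ 0).continuousAt
  set I : Set ℝ := ℓ ⁻¹' ω with hIdef
  have hIopen : IsOpen I := hω.preimage (by continuity)
  have h0I : (0:ℝ) ∈ I := by simp [hIdef, hℓ0, ha]
  have hImem : I ∈ nhds (0:ℝ) := hIopen.mem_nhds h0I
  have hdiff : ∀ x ∈ ω, DifferentiableAt ℝ u x := fun x hx =>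
    (hC2.differentiableOn (by norm_num)).differentiableAt (hω.mem_nhds hx)
  set g : ℝ → ℝ := fun t => u (ℓ t) with hgdef
  set h : ℝ → ℝ := fun t => fderiv ℝ u (ℓ t) v with hhdef
  have hg : ∀ t ∈ I, HasDerivAt g (h t) t := fun t ht =>
    (hdiff _ ht).hasFDerivAt.comp_hasDerivAt t (hℓ t)
  have hFd : DifferentiableAt ℝ (fderiv ℝ u) a := by
    have h1 : ContDiffAt ℝ 2 u a := hC2.contDiffAt (hω.mem_nhds ha)
    exact (h1.fderiv_right (m := 1) (by norm_num)).differentiableAt one_ne_zero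
  have hcomp : HasDerivAt (fun t => fderiv ℝ u (ℓ t)) (fderiv ℝ (fderiv ℝ u) a v) 0 := by
    have hFd' : HasFDerivAt (fderiv ℝ u) (fderiv ℝ (fderiv ℝ u) a) (ℓ 0) := by
      rw [hℓ0]; exact hFd.hasFDerivAt
    exact hFd'.comp_hasDerivAt 0 (hℓ 0)
  have hh : HasDerivAt h (fderiv ℝ (fderiv ℝ u) a v v) 0 := by
    have := hcomp.clm_apply (hasDerivAt_const 0 v)
    simpa using this
  have h00 : h 0 = 0 := by
    simp only [hhdef, hℓ0]
    rw [hmax.fderiv_eq_zero]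
    rfl
  have hgmax : IsLocalMax g 0 := by
    have : Filter.Tendsto ℓ (nhds 0) (nhds a) := by rwa [← hℓ0]
    have hev := this.eventually hmax
    filter_upwards [hev] with t ht
    simpa [hgdef, hℓ0] using ht
  exact key1d g h _ I hImem hg h00 hh hgmax

theorem stmt17 (n : ℕ) (hn : 1 ≤ n) (Ω : Set (EuclideanSpace ℝ (Fin n))) (hΩ : IsOpen Ω)
    (B C ε : ℝ) (hB : 0 < B) (u : EuclideanSpace ℝ (Fin n) → ℝ)
    (hcont : ContinuousOn u Ω)
    (hC2 : ContDiffOn ℝ 2 u {x | x ∈ Ω ∧ 0 < u x})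
    (hineq : ∀ x ∈ {x | x ∈ Ω ∧ 0 < u x},
      u x * lap u x - B * |u x| ^ (1 + ε) - C * ‖gradient u x‖ ^ 2 ≥ 0)
    (x₀ : EuclideanSpace ℝ (Fin n)) (hx₀ : x₀ ∈ Ω) (hux₀ : 0 < u x₀) :
    ¬∃ x₁ ∈ Ω, ∀ x ∈ Ω, u x ≤ u x₁ := by
  rintro ⟨x₁, hx₁, hmaxon⟩
  set ω : Set (EuclideanSpace ℝ (Fin n)) := {x | x ∈ Ω ∧ 0 < u x} with hωdef
  have hωopen : IsOpen ω := by
    have : ω = Ω ∩ u ⁻¹' Set.Ioi 0 := by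
      ext x; simp [hωdef, Set.mem_Ioi]
    rw [this]
    exact hcont.isOpen_inter_preimage hΩ isOpen_Ioi
  have hu1 : 0 < u x₁ := lt_of_lt_of_le hux₀ (hmaxon x₀ hx₀)
  have hx₁ω : x₁ ∈ ω := ⟨hx₁, hu1⟩
  have hmax : IsLocalMax u x₁ :=
    Filter.eventually_of_mem (hΩ.mem_nhds hx₁) hmaxon
  -- gradient is zero
  have hfz : fderiv ℝ u x₁ = 0 := hmax.fderiv_eq_zero
  have hgradz : gradient u x₁ = 0 := by
    rw [gradient, hfz, map_zero]
  -- laplacian is nonpositive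
  have hlap : lap u x₁ ≤ 0 := by
    unfold lap
    apply Finset.sum_nonpos
    intro i _
    rw [iteratedFDeriv_two_apply]
    simpa using dir_second_nonpos u ω hωopen hC2 x₁ hx₁ω hmax (EuclideanSpace.single i 1)
  have hineq1 := hineq x₁ hx₁ω
  have hP : 0 < |u x₁| ^ (1 + ε) := Real.rpow_pos_of_pos (abs_pos.mpr (ne_of_gt hu1)) _
  rw [hgradz] at hineq1
  simp only [norm_zero] at hineq1
  nlinarith [mul_nonpos_of_nonneg_of_nonpos (le_of_lt hu1) hlap, mul_pos hB hP]
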